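/- Let (B, G) be an MV-pair, let a, b ∈ B, and let m be a maximal element of L(a,b) = {a ∧ f(b) : f ∈ G}. Then for every f ∈ G, f(m) is a maximal element of L⁺(a,b) = {g(a) ∧ f(b) : f, g ∈ G}. -/
import Mathlib


/-- An effect algebra: a partial algebra `(α; ⊕, 0, 1)`.  The partial operation is
encoded by a total function `add` together with a definedness predicate `D`. -/
structure EffectAlgebra (α : Type*) where
  D : α → α → Prop
  add : α → α → α
  zero : α
  one : α
  comm_def : ∀ a b, D a b → D b a
  comm : ∀ a b, D a b → add a b = add b a
  assoc_def₁ : ∀ a b c, D a b → D (add a b) c → D b c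
  assoc_def₂ : ∀ a b c, D a b → D (add a b) c → D a (add b c)
  assoc : ∀ a b c, D a b → D (add a b) c → add (add a b) c = add a (add b c)
  orth_exists : ∀ a, ∃! b, D a b ∧ add a b = one
  add_one : ∀ a, D a one → a = zero

namespace EffectAlgebra

variable {α : Type*}
open Classical

/-- The induced order: `a ≤ b` iff `∃ c, a ⊕ c = b`. -/
def le (E : EffectAlgebra α) (a b : α) : Prop := ∃ c, E.D a c ∧ E.add a c = b

/-- The orthosupplement `a'`. -/
noncomputable def orth (E : EffectAlgebra α) (a : α) : α := (E.orth_exists a).choose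

/-- Partial difference: `sub b a = b ⊖ a`, intended for `a ≤ b`. -/
noncomputable def sub (E : EffectAlgebra α) (b a : α) : α :=
  if h : ∃ c, E.D a c ∧ E.add a c = b then h.choose else E.zero

end EffectAlgebra

section BGpair

variable {α : Type*} [BooleanAlgebra α]

/-- `L(a,b) = {a ∧ f(b) : f ∈ G}`. -/
def Lset (G : Subgroup (α ≃o α)) (a b : α) : Set α := {x | ∃ f ∈ G, x = a ⊓ f b}

/-- `L⁺(a,b) = {g(a) ∧ f(b) : f, g ∈ G}`. -/
def Lplus (G : Subgroup (α ≃o α)) (a b : α) : Set α :=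
  {x | ∃ f ∈ G, ∃ g ∈ G, x = g a ⊓ f b}

/-- Condition (MVP1). -/
def MVP1 (G : Subgroup (α ≃o α)) : Prop :=
  ∀ (a b : α) (f : α ≃o α), f ∈ G → a ≤ b → f a ≤ b →
    ∃ h ∈ G, h a = f a ∧ h b = b

/-- Condition (MVP2): every element of `L(a,b)` lies below a maximal element of `L(a,b)`. -/
def MVP2 (G : Subgroup (α ≃o α)) : Prop :=
  ∀ (a b x : α), x ∈ Lset G a b →
    ∃ m ∈ Lset G a b, x ≤ m ∧ ∀ y ∈ Lset G a b, m ≤ y → y = m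

/-- The equivalence `a ∼_G b` iff `f(a) = b` for some `f ∈ G`. -/
def rG (G : Subgroup (α ≃o α)) (a b : α) : Prop := ∃ f ∈ G, f a = b

end BGpair

/-- in an MV-pair, images under `G` of maximal elements of `L(a,b)` are
maximal in `L⁺(a,b)`. -/
theorem stmt8 {α : Type*} [BooleanAlgebra α] (G : Subgroup (α ≃o α))
    (h1 : MVP1 G) (h2 : MVP2 G) (a b m : α)
    (hm : m ∈ Lset G a b) (hmax : ∀ y ∈ Lset G a b, m ≤ y → y = m)
    (f : α ≃o α) (hf : f ∈ G) :
    f m ∈ Lplus G a b ∧ ∀ y ∈ Lplus G a b, f m ≤ y → y = f m := by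

  obtain ⟨k, hk, hmk⟩ := hm
  have hfm : f m = f a ⊓ (f * k) b := by
    rw [hmk, map_inf]; rfl
  constructor
  · exact ⟨f * k, mul_mem hf hk, f, hf, hfm⟩
  · rintro y ⟨h, hh, g, hg, rfl⟩ hle
    -- x = g⁻¹ * f
    have hma : m ≤ a := by rw [hmk]; exact inf_le_left
    have hxle : (g⁻¹ * f) m ≤ a ⊓ (g⁻¹ * h) b := by
      have := (g⁻¹ : α ≃o α).monotone hle
      simpa [map_inf] using this
    have hxa : (g⁻¹ * f) m ≤ a := hxle.trans inf_le_left
    obtain ⟨h', hh', hh'm, hh'a⟩ := h1 m a (g⁻¹ * f) (mul_mem (inv_mem hg) hf) hma hxa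
    have hinva : (h'⁻¹ : α ≃o α) a = a := by
      have := congrArg (h'⁻¹ : α ≃o α) hh'a
      simpa using this.symm
    have hmle : m ≤ (h'⁻¹ : α ≃o α) (a ⊓ (g⁻¹ * h) b) := by
      have := (h'⁻¹ : α ≃o α).monotone hxle
      rw [← hh'm] at this
      simpa using this
    have hmem : (h'⁻¹ : α ≃o α) (a ⊓ (g⁻¹ * h) b) ∈ Lset G a b := by
      refine ⟨h'⁻¹ * g⁻¹ * h, mul_mem (mul_mem (inv_mem hh') (inv_mem hg)) hh, ?_⟩
      rw [map_inf, hinva]; rfl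
    have heq := hmax _ hmem hmle
    -- so h'⁻¹ (g⁻¹ y) = m, hence g⁻¹ y = h' m = (g⁻¹ * f) m, hence y = f m
    have : a ⊓ (g⁻¹ * h) b = h' m := by
      have := congrArg (h' : α ≃o α) heq
      simpa using this
    rw [hh'm] at this
    have : g a ⊓ h b = g ((g⁻¹ * f) m) := by
      have := congrArg (g : α ≃o α) this
      simpa [map_inf] using this
    rw [this]
    show g (g⁻¹ (f m)) = f m
    simp
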